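/- arXiv:2307.10226 — 3 statements merged into one kernel-verified Lean document; each statement's English description precedes it below -/
import Mathlib

section
/- Let Π be an extended program, let F be the FOL-representation of Π, and let Y be a finite set of atoms not containing equality. Then EFES_Π(Y) is equivalent to ¬NFES_F(Y) under the assumption Π; that is, every model of Π satisfies the universal closure of EFES_Π(Y) ↔ ¬NFES_F(Y). -/
set_option linter.unusedVariables false

namespace SMLF

/-- Terms: object variables (named by naturals) and object constants.
There are no function constants of positive arity. -/
inductive Term (C : Type) where
  | var : ℕ → Term C
  | const : C → Term C

variable {C P D : Type} {ar : P → ℕ}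

def Term.eval (cI : C → D) (v : ℕ → D) : Term C → D
  | .var x => v x
  | .const c => cI c

def Term.vars : Term C → Set ℕ
  | .var x => {x}
  | .const _ => ∅

def Term.consts : Term C → Set C
  | .var _ => ∅
  | .const c => {c}

def Term.subst (θ : ℕ → Term C) : Term C → Term C
  | .var x => θ x
  | .const c => .const c

def Term.isVar : Term C → Prop
  | .var _ => True
  | .const _ => False

/-- A (non-equality) atom `p(t₁,…,tₖ)`. -/
abbrev Atom (C P : Type) (ar : P → ℕ) := Σ p : P, Fin (ar p) → Term C

def Atom.subst (θ : ℕ → Term C) (a : Atom C P ar) : Atom C P ar :=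
  ⟨a.1, fun i => (a.2 i).subst θ⟩

def Atom.vars (a : Atom C P ar) : Set ℕ := {x | ∃ i, a.2 i = Term.var x}

/-- An interpretation of the predicate constants over universe `D`
(also used for tuples `u` of predicate variables). -/
def PredI (P : Type) (ar : P → ℕ) (D : Type) : Type := ∀ p : P, (Fin (ar p) → D) → Prop

/-- `u ≤ p` : conjunction of ∀x(uᵢ(x) → pᵢ(x)). -/
def PredI.le (uI pI : PredI P ar D) : Prop := ∀ p xs, uI p xs → pI p xs

/-- `u = p` : conjunction of ∀x(uᵢ(x) ↔ pᵢ(x)). -/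
def PredI.eqv (uI pI : PredI P ar D) : Prop := ∀ p xs, uI p xs ↔ pI p xs

/-- `u < p` : (u ≤ p) ∧ ¬(u = p). -/
def PredI.lt (uI pI : PredI P ar D) : Prop := PredI.le uI pI ∧ ¬ PredI.eqv uI pI

/-- `Nonempty(u)` : ∃x¹ u₁(x¹) ∨ … ∨ ∃xⁿ uₙ(xⁿ). -/
def PredI.nonemp (uI : PredI P ar D) : Prop := ∃ p xs, uI p xs

/-- First-order formulas (¬F is shorthand for F → ⊥). -/
inductive Fml (C P : Type) (ar : P → ℕ) where
  | atom : (p : P) → (Fin (ar p) → Term C) → Fml C P ar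
  | eq : Term C → Term C → Fml C P ar
  | bot : Fml C P ar
  | and : Fml C P ar → Fml C P ar → Fml C P ar
  | or : Fml C P ar → Fml C P ar → Fml C P ar
  | imp : Fml C P ar → Fml C P ar → Fml C P ar
  | all : ℕ → Fml C P ar → Fml C P ar
  | ex : ℕ → Fml C P ar → Fml C P ar

/-- Tarskian satisfaction `I,v ⊨ F`. -/
def Fml.sat (cI : C → D) (pI : PredI P ar D) : Fml C P ar → (ℕ → D) → Prop
  | .atom p t, v => pI p (fun i => (t i).eval cI v)
  | .eq t₁ t₂, v => t₁.eval cI v = t₂.eval cI v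
  | .bot, _ => False
  | .and F G, v => F.sat cI pI v ∧ G.sat cI pI v
  | .or F G, v => F.sat cI pI v ∨ G.sat cI pI v
  | .imp F G, v => F.sat cI pI v → G.sat cI pI v
  | .all x F, v => ∀ d : D, F.sat cI pI (Function.update v x d)
  | .ex x F, v => ∃ d : D, F.sat cI pI (Function.update v x d)

/-- Satisfaction of a sentence (truth under every valuation). -/
def Fml.satSent (cI : C → D) (pI : PredI P ar D) (F : Fml C P ar) : Prop :=
  ∀ v : ℕ → D, F.sat cI pI v

/-- Satisfaction of `F*(u)` (atoms read via `uI`, the `F → G` clause also keeps `F → G`). -/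
def Fml.satStar (cI : C → D) (pI uI : PredI P ar D) : Fml C P ar → (ℕ → D) → Prop
  | .atom p t, v => uI p (fun i => (t i).eval cI v)
  | .eq t₁ t₂, v => t₁.eval cI v = t₂.eval cI v
  | .bot, _ => False
  | .and F G, v => F.satStar cI pI uI v ∧ G.satStar cI pI uI v
  | .or F G, v => F.satStar cI pI uI v ∨ G.satStar cI pI uI v
  | .imp F G, v => (F.satStar cI pI uI v → G.satStar cI pI uI v) ∧ (F.sat cI pI v → G.sat cI pI v)
  | .all x F, v => ∀ d : D, F.satStar cI pI uI (Function.update v x d)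
  | .ex x F, v => ∃ d : D, F.satStar cI pI uI (Function.update v x d)

/-- `I ⊨ SM[F]` for a sentence `F`: `F ∧ ¬∃u((u < p) ∧ F*(u))`. -/
def satSM (cI : C → D) (pI : PredI P ar D) (F : Fml C P ar) : Prop :=
  F.satSent cI pI ∧
    ¬ ∃ uI : PredI P ar D, PredI.lt uI pI ∧ ∀ v : ℕ → D, F.satStar cI pI uI v

/-- Satisfaction of `NES_F(u)`. -/
def Fml.satNES (cI : C → D) (pI uI : PredI P ar D) : Fml C P ar → (ℕ → D) → Prop
  | .atom p t, v => pI p (fun i => (t i).eval cI v) ∧ ¬ uI p (fun i => (t i).eval cI v)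
  | .eq t₁ t₂, v => t₁.eval cI v = t₂.eval cI v
  | .bot, _ => False
  | .and F G, v => F.satNES cI pI uI v ∧ G.satNES cI pI uI v
  | .or F G, v => F.satNES cI pI uI v ∨ G.satNES cI pI uI v
  | .imp F G, v => (F.satNES cI pI uI v → G.satNES cI pI uI v) ∧ (F.sat cI pI v → G.sat cI pI v)
  | .all x F, v => ∀ d : D, F.satNES cI pI uI (Function.update v x d)
  | .ex x F, v => ∃ d : D, F.satNES cI pI uI (Function.update v x d)

def Fml.freeVars : Fml C P ar → Set ℕ
  | .atom _ t => ⋃ i, (t i).vars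
  | .eq t₁ t₂ => t₁.vars ∪ t₂.vars
  | .bot => ∅
  | .and F G => F.freeVars ∪ G.freeVars
  | .or F G => F.freeVars ∪ G.freeVars
  | .imp F G => F.freeVars ∪ G.freeVars
  | .all x F => F.freeVars \ {x}
  | .ex x F => F.freeVars \ {x}

/-- The list of quantified (bound) variable occurrences, in order. -/
def Fml.quantVars : Fml C P ar → List ℕ
  | .atom _ _ => []
  | .eq _ _ => []
  | .bot => []
  | .and F G => F.quantVars ++ G.quantVars
  | .or F G => F.quantVars ++ G.quantVars
  | .imp F G => F.quantVars ++ G.quantVars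
  | .all x F => x :: F.quantVars
  | .ex x F => x :: F.quantVars

/-- Rectified form: no variable is both bound and free, and quantifiers
are followed by pairwise distinct variables. -/
def Fml.rectified (F : Fml C P ar) : Prop :=
  F.quantVars.Nodup ∧ ∀ x ∈ F.quantVars, x ∉ F.freeVars

def Fml.preds : Fml C P ar → Set P
  | .atom p _ => {p}
  | .eq _ _ => ∅
  | .bot => ∅
  | .and F G => F.preds ∪ G.preds
  | .or F G => F.preds ∪ G.preds
  | .imp F G => F.preds ∪ G.preds
  | .all _ F => F.preds
  | .ex _ F => F.preds

def Fml.consts : Fml C P ar → Set C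
  | .atom _ t => ⋃ i, (t i).consts
  | .eq t₁ t₂ => t₁.consts ∪ t₂.consts
  | .bot => ∅
  | .and F G => F.consts ∪ G.consts
  | .or F G => F.consts ∪ G.consts
  | .imp F G => F.consts ∪ G.consts
  | .all _ F => F.consts
  | .ex _ F => F.consts

/-- All (non-equality) atoms occurring in a formula. -/
def Fml.atomsOf : Fml C P ar → Set (Atom C P ar)
  | .atom p t => {⟨p, t⟩}
  | .eq _ _ => ∅
  | .bot => ∅
  | .and F G => F.atomsOf ∪ G.atomsOf
  | .or F G => F.atomsOf ∪ G.atomsOf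
  | .imp F G => F.atomsOf ∪ G.atomsOf
  | .all _ F => F.atomsOf
  | .ex _ F => F.atomsOf

def Fml.isNegativeB : Fml C P ar → Bool
  | .atom _ _ => false
  | .eq _ _ => true
  | .bot => true
  | .and F G => F.isNegativeB && G.isNegativeB
  | .or F G => F.isNegativeB && G.isNegativeB
  | .imp _ G => G.isNegativeB
  | .all _ F => F.isNegativeB
  | .ex _ F => F.isNegativeB

/-- A formula is negative if every occurrence of every predicate constant in it
belongs to the antecedent of an implication. -/
def Fml.isNegative (F : Fml C P ar) : Prop := F.isNegativeB = true

/-- Atoms with a strictly positive occurrence. -/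
def Fml.spAtoms : Fml C P ar → Set (Atom C P ar)
  | .atom p t => {⟨p, t⟩}
  | .eq _ _ => ∅
  | .bot => ∅
  | .and F G => F.spAtoms ∪ G.spAtoms
  | .or F G => F.spAtoms ∪ G.spAtoms
  | .imp _ G => G.spAtoms
  | .all _ F => F.spAtoms
  | .ex _ F => F.spAtoms

/-- Implications `G → H` with a strictly positive occurrence. -/
def Fml.spImps : Fml C P ar → Set (Fml C P ar × Fml C P ar)
  | .atom _ _ => ∅
  | .eq _ _ => ∅
  | .bot => ∅
  | .and F G => F.spImps ∪ G.spImps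
  | .or F G => F.spImps ∪ G.spImps
  | .imp F G => insert (F, G) G.spImps
  | .all _ F => F.spImps
  | .ex _ F => F.spImps

/-- Atoms with an occurrence of polarity `b` (`true` = positive) that does not
belong to any occurrence of a negative subformula. -/
def Fml.polNN : Bool → Fml C P ar → Set (Atom C P ar)
  | true, .atom p t => {⟨p, t⟩}
  | false, .atom _ _ => ∅
  | _, .eq _ _ => ∅
  | _, .bot => ∅
  | b, .and F G =>
      if (Fml.and F G).isNegativeB then ∅ else Fml.polNN b F ∪ Fml.polNN b G
  | b, .or F G =>
      if (Fml.or F G).isNegativeB then ∅ else Fml.polNN b F ∪ Fml.polNN b G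
  | b, .imp F G =>
      if (Fml.imp F G).isNegativeB then ∅ else Fml.polNN (!b) F ∪ Fml.polNN b G
  | b, .all x F => if (Fml.all x F).isNegativeB then ∅ else Fml.polNN b F
  | b, .ex x F => if (Fml.ex x F).isNegativeB then ∅ else Fml.polNN b F

/-- `a` depends on `b` in `F`: `a` weakly depends on `b` in an implication that has a
strictly positive occurrence in `F`. -/
def Fml.depends (F : Fml C P ar) (a b : Atom C P ar) : Prop :=
  ∃ GH ∈ F.spImps, a ∈ (Prod.snd GH).spAtoms ∧ b ∈ Fml.polNN true (Prod.fst GH)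

/-- `E_F(v,u)`. -/
def satE (cI : C → D) (F : Fml C P ar) (vI uI : PredI P ar D) : Prop :=
  ∃ a b : Atom C P ar, F.depends a b ∧ ∃ θ : ℕ → D,
    vI a.1 (fun i => (a.2 i).eval cI θ) ∧ uI b.1 (fun i => (b.2 i).eval cI θ) ∧
      ¬ vI b.1 (fun i => (b.2 i).eval cI θ)

/-- `SC_F(u)` : Nonempty(u) ∧ ∀v((v < u) ∧ Nonempty(v) → E_F(v,u)). -/
def satSC (cI : C → D) (F : Fml C P ar) (uI : PredI P ar D) : Prop :=
  PredI.nonemp uI ∧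
    ∀ vI : PredI P ar D, PredI.lt vI uI → PredI.nonemp vI → satE cI F vI uI

/-- `Loop_F(u)` : SC_F(u) ∨ (Nonempty(u) ∧ ∀v((v ≤ u) ∧ SC_F(v) → E_F(v,u))). -/
def satLoopF (cI : C → D) (F : Fml C P ar) (uI : PredI P ar D) : Prop :=
  satSC cI F uI ∨ (PredI.nonemp uI ∧
    ∀ vI : PredI P ar D, PredI.le vI uI → satSC cI F vI → satE cI F vI uI)

/-- Semantic atoms `pᵢ(ξ⃗*)`, where `ξ⃗` is a tuple of universe elements. -/
abbrev SAtom (P : Type) (ar : P → ℕ) (D : Type) := Σ p : P, Fin (ar p) → D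

/-- Edges of the dependency graph of `F` w.r.t. an interpretation. -/
def edgeWrt (cI : C → D) (F : Fml C P ar) (a b : SAtom P ar D) : Prop :=
  ∃ a0 b0 : Atom C P ar, F.depends a0 b0 ∧ ∃ θ : ℕ → D,
    (⟨a0.1, fun i => (a0.2 i).eval cI θ⟩ : SAtom P ar D) = a ∧
    (⟨b0.1, fun i => (b0.2 i).eval cI θ⟩ : SAtom P ar D) = b

/-- The subgraph induced by `Y` is strongly connected. -/
def SCin {V : Type} (E : V → V → Prop) (Y : Set V) : Prop :=
  ∀ a ∈ Y, ∀ b ∈ Y, Relation.ReflTransGen (fun x y => x ∈ Y ∧ y ∈ Y ∧ E x y) a b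

/-- A loop of `F` w.r.t. `I`: nonempty (possibly infinite) set of semantic atoms
inducing a strongly connected subgraph of the dependency graph of `F` w.r.t. `I`. -/
def isLoopWrt (cI : C → D) (F : Fml C P ar) (Y : Set (SAtom P ar D)) : Prop :=
  Y.Nonempty ∧ SCin (edgeWrt cI F) Y

/-- An unbounded set of `F` w.r.t. `I`. -/
def isUnboundedWrt (cI : C → D) (F : Fml C P ar) (Y : Set (SAtom P ar D)) : Prop :=
  Y.Nonempty ∧ ∀ Z ⊆ Y, Z.Nonempty → SCin (edgeWrt cI F) Z →
    ∃ a ∈ Z, ∃ b ∈ Y \ Z, edgeWrt cI F a b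

/-- An extended loop of `F` w.r.t. `I`: a loop or an unbounded set. -/
def isExtLoopWrt (cI : C → D) (F : Fml C P ar) (Y : Set (SAtom P ar D)) : Prop :=
  isLoopWrt cI F Y ∨ isUnboundedWrt cI F Y

/-- Edges of the first-order dependency graph of `F`. -/
def foEdge (F : Fml C P ar) (a b : Atom C P ar) : Prop :=
  ∃ a0 b0 : Atom C P ar, F.depends a0 b0 ∧ ∃ θ : ℕ → Term C,
    a0.subst θ = a ∧ b0.subst θ = b

/-- A first-order loop of `F`. -/
def isFOLoop (F : Fml C P ar) (Y : Set (Atom C P ar)) : Prop :=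
  Y.Finite ∧ Y.Nonempty ∧ SCin (foEdge F) Y

/-- Normal form: no object constants occur in strictly positive occurrences of atoms. -/
def Fml.normalForm (F : Fml C P ar) : Prop :=
  ∀ a ∈ F.spAtoms, ∀ i, (a.2 i).isVar

/-- `Y₁` subsumes `Y₂`. -/
def subsumes (Y₁ Y₂ : Set (Atom C P ar)) : Prop :=
  ∃ θ : ℕ → Term C, Atom.subst θ '' Y₁ = Y₂

/-- Satisfaction of `NFES_F(Y)`; the terms of the atoms in `Y` are evaluated under the
outer valuation `w` (implementing the renaming of the bound variables of `F` apart
from `Y`), the terms of `F` under the current valuation `v`. -/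
def Fml.satNFES (cI : C → D) (pI : PredI P ar D) (Y : Set (Atom C P ar)) (w : ℕ → D) :
    Fml C P ar → (ℕ → D) → Prop
  | .atom p t, v => pI p (fun i => (t i).eval cI v) ∧
      ∀ t' : Fin (ar p) → Term C, (⟨p, t'⟩ : Atom C P ar) ∈ Y →
        ¬ ∀ i, (t i).eval cI v = (t' i).eval cI w
  | .eq t₁ t₂, v => t₁.eval cI v = t₂.eval cI v
  | .bot, _ => False
  | .and F G, v => F.satNFES cI pI Y w v ∧ G.satNFES cI pI Y w v
  | .or F G, v => F.satNFES cI pI Y w v ∨ G.satNFES cI pI Y w v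
  | .imp F G, v =>
      (F.satNFES cI pI Y w v → G.satNFES cI pI Y w v) ∧ (F.sat cI pI v → G.sat cI pI v)
  | .all x F, v => ∀ d : D, F.satNFES cI pI Y w (Function.update v x d)
  | .ex x F, v => ∃ d : D, F.satNFES cI pI Y w (Function.update v x d)

/-- Truth of an atom of `Y` under valuation `w`. -/
def Atom.holds (cI : C → D) (pI : PredI P ar D) (w : ℕ → D) (a : Atom C P ar) : Prop :=
  pI a.1 (fun i => (a.2 i).eval cI w)

/-- `I ⊨ FLF_F(Y)` : the universal closure (over the variables of `Y`) of
`⋀Y → ¬NFES_F(Y)`. -/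
def satFLF (cI : C → D) (pI : PredI P ar D) (F : Fml C P ar) (Y : Set (Atom C P ar)) : Prop :=
  ∀ w : ℕ → D, (∀ a ∈ Y, a.holds cI pI w) → ¬ F.satNFES cI pI Y w w

/-- Restricted variables `RV(F)`. -/
def Fml.RV : Fml C P ar → Set ℕ
  | .atom _ t => ⋃ i, (t i).vars
  | .eq (.var _) (.var _) => ∅
  | .eq t₁ t₂ => t₁.vars ∪ t₂.vars
  | .bot => ∅
  | .and F G => F.RV ∪ G.RV
  | .or F G => F.RV ∩ G.RV
  | .imp _ _ => ∅
  | .all x F => F.RV \ {x}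
  | .ex x F => F.RV \ {x}

/-- The unsafe variables of `F`: variables with an occurrence not in `∀x`, `∃x`, nor in
any subformula `G → H` with `x ∈ RV(G)`. -/
def Fml.unsafeVars : Fml C P ar → Set ℕ
  | .atom _ t => ⋃ i, (t i).vars
  | .eq t₁ t₂ => t₁.vars ∪ t₂.vars
  | .bot => ∅
  | .and F G => F.unsafeVars ∪ G.unsafeVars
  | .or F G => F.unsafeVars ∪ G.unsafeVars
  | .imp F G => (F.unsafeVars ∪ G.unsafeVars) \ F.RV
  | .all _ F => F.unsafeVars
  | .ex _ F => F.unsafeVars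

/-- `I ⊨ U_F`. -/
def satU (cI : C → D) (pI : PredI P ar D) (F : Fml C P ar) : Prop :=
  ∀ p : P, ∀ xs : Fin (ar p) → D, pI p xs → ∀ i, ∃ c ∈ F.consts, xs i = cI c

/-! ### Logic programs -/

def Term.varList : Term C → List ℕ
  | .var x => [x]
  | .const _ => []

def Fml.freeList : Fml C P ar → List ℕ
  | .atom p t => (List.finRange (ar p)).foldr (fun i l => (t i).varList ++ l) []
  | .eq t₁ t₂ => t₁.varList ++ t₂.varList
  | .bot => []
  | .and F G => F.freeList ++ G.freeList
  | .or F G => F.freeList ++ G.freeList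
  | .imp F G => F.freeList ++ G.freeList
  | .all x F => F.freeList.filter (· ≠ x)
  | .ex x F => F.freeList.filter (· ≠ x)

/-- Universal closure. -/
def Fml.closure (F : Fml C P ar) : Fml C P ar := F.freeList.foldr Fml.all F

def Fml.top : Fml C P ar := Fml.imp Fml.bot Fml.bot

def Atom.toFml (a : Atom C P ar) : Fml C P ar := Fml.atom a.1 a.2

/-- A nondisjunctive rule `A ← B, N` (`N` is required to be a negative formula
in the statements below). -/
structure NRule (C P : Type) (ar : P → ℕ) where
  head : Atom C P ar
  body : List (Atom C P ar)
  neg : Fml C P ar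

/-- A nondisjunctive program. -/
abbrev NProg (C P : Type) (ar : P → ℕ) := List (NRule C P ar)

def NRule.toFml (r : NRule C P ar) : Fml C P ar :=
  Fml.imp (r.body.foldr (fun a G => (Atom.toFml a).and G) r.neg) (Atom.toFml r.head)

/-- FOL-representation of a nondisjunctive program. -/
def NProg.toFml (Pr : NProg C P ar) : Fml C P ar :=
  Pr.foldr (fun r G => (Fml.closure (NRule.toFml r)).and G) Fml.top

/-- Terms occurring in `Y`. -/
def termsOf (Y : Set (Atom C P ar)) : Set (Term C) := {t | ∃ a ∈ Y, ∃ i, a.2 i = t}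

def NRule.headVars (r : NRule C P ar) : Set ℕ := Atom.vars r.head

/-- One disjunct of `FES_Π(Y)`, evaluated under the valuation `w` of the
variables of `Y` (the variables of the rule are implicitly renamed apart from `Y`:
they are interpreted by the existential valuation `s`, while terms of `Y` and the
`θ`-images of head variables are evaluated under `w`). -/
def NRule.FES (cI : C → D) (pI : PredI P ar D) (r : NRule C P ar)
    (Y : Set (Atom C P ar)) (w : ℕ → D) : Prop :=
  ∃ θ : ℕ → Option (Term C),
    (∀ x ∈ NRule.headVars r, ∃ t ∈ termsOf Y, θ x = some t) ∧
    (∀ x, x ∉ NRule.headVars r → θ x = none) ∧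
    Atom.subst (fun x => (θ x).getD (Term.var x)) r.head ∈ Y ∧
    ∃ s : ℕ → D,
      let v : ℕ → D := fun x => match θ x with
        | some t => t.eval cI w
        | none => s x
      (∀ b ∈ r.body, pI b.1 (fun i => (b.2 i).eval cI v)) ∧
      (NRule.neg r).sat cI pI v ∧
      (∀ b ∈ r.body, ∀ t' : Fin (ar b.1) → Term C, (⟨b.1, t'⟩ : Atom C P ar) ∈ Y →
        ¬ ∀ i, (b.2 i).eval cI v = (t' i).eval cI w)

/-- `FES_Π(Y)` under valuation `w`. -/
def NProg.FES (cI : C → D) (pI : PredI P ar D) (Pr : NProg C P ar)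
    (Y : Set (Atom C P ar)) (w : ℕ → D) : Prop :=
  ∃ r ∈ Pr, NRule.FES cI pI r Y w

/-- `I ⊨ FLF_Π(Y)`. -/
def NProg.satFLF (cI : C → D) (pI : PredI P ar D) (Pr : NProg C P ar)
    (Y : Set (Atom C P ar)) : Prop :=
  ∀ w : ℕ → D, (∀ a ∈ Y, Atom.holds cI pI w a) → NProg.FES cI pI Pr Y w

/-- `p(t)` depends on `q(t')` in the program `Pr`. -/
def NProg.depends (Pr : NProg C P ar) (a b : Atom C P ar) : Prop :=
  ∃ r ∈ Pr, NRule.head r = a ∧ b ∈ NRule.body r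

/-- Edges of the first-order dependency graph of a nondisjunctive program. -/
def NProg.foEdge (Pr : NProg C P ar) (a b : Atom C P ar) : Prop :=
  ∃ a0 b0 : Atom C P ar, NProg.depends Pr a0 b0 ∧ ∃ θ : ℕ → Term C,
    a0.subst θ = a ∧ b0.subst θ = b

/-- First-order loops of a nondisjunctive program. -/
def NProg.isFOLoop (Pr : NProg C P ar) (Y : Set (Atom C P ar)) : Prop :=
  Y.Finite ∧ Y.Nonempty ∧ SCin (NProg.foEdge Pr) Y

/-! ### Grounding (Herbrand universe `C`, constants denote themselves) -/

/-- Ground atoms of `σ(Π)^g`. -/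
abbrev GAtom (C P : Type) (ar : P → ℕ) := Σ p : P, Fin (ar p) → C

/-- The ground instance of an atom under an assignment of constants to variables. -/
def Atom.ground (v : ℕ → C) (a : Atom C P ar) : GAtom C P ar :=
  ⟨a.1, fun i => (a.2 i).eval id v⟩

/-- `I ⊨ LF_{Ground(Π)}(Y)` for a set `Y` of ground atoms and an Herbrand
interpretation given by `pI`. -/
def NProg.satLFg (pI : PredI P ar C) (Pr : NProg C P ar) (Y : Set (GAtom C P ar)) : Prop :=
  (∀ a ∈ Y, pI a.1 a.2) → ∃ r ∈ Pr, ∃ v : ℕ → C,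
    Atom.ground v (NRule.head r) ∈ Y ∧
    (∀ b ∈ NRule.body r, Atom.ground v b ∉ Y) ∧
    (∀ b ∈ NRule.body r, pI b.1 (fun i => (b.2 i).eval id v)) ∧
    (NRule.neg r).sat id pI v

/-- Edges of the dependency graph of `Ground(Π)`. -/
def NProg.gEdge (Pr : NProg C P ar) (a b : GAtom C P ar) : Prop :=
  ∃ r ∈ Pr, ∃ v : ℕ → C,
    Atom.ground v (NRule.head r) = a ∧ ∃ b0 ∈ NRule.body r, Atom.ground v b0 = b

/-- Loops of `Ground(Π)`. -/
def NProg.gLoop (Pr : NProg C P ar) (Y : Set (GAtom C P ar)) : Prop :=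
  Y.Nonempty ∧ SCin (NProg.gEdge Pr) Y

/-- A ground atom occurs in `Ground(Π)`. -/
def NProg.occursInGround (Pr : NProg C P ar) (a : GAtom C P ar) : Prop :=
  ∃ r ∈ Pr, ∃ v : ℕ → C,
    Atom.ground v (NRule.head r) = a ∨ (∃ b ∈ NRule.body r, Atom.ground v b = a) ∨
      ∃ a0 ∈ (NRule.neg r).atomsOf, Atom.ground v a0 = a

/-! ### Disjunctive programs -/

/-- A disjunctive rule `A ← B, N`. -/
structure DRule (C P : Type) (ar : P → ℕ) where
  head : List (Atom C P ar)
  body : List (Atom C P ar)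
  neg : Fml C P ar

abbrev DProg (C P : Type) (ar : P → ℕ) := List (DRule C P ar)

def DRule.toFml (r : DRule C P ar) : Fml C P ar :=
  Fml.imp (r.body.foldr (fun a G => (Atom.toFml a).and G) r.neg)
    (r.head.foldr (fun a G => (Atom.toFml a).or G) Fml.bot)

def DProg.toFml (Pr : DProg C P ar) : Fml C P ar :=
  Pr.foldr (fun r G => (Fml.closure (DRule.toFml r)).and G) Fml.top

def DRule.headVars (r : DRule C P ar) : Set ℕ :=
  {x | ∃ a ∈ r.head, ∃ i, a.2 i = Term.var x}

/-- One disjunct of the disjunctive `FES_Π(Y)` under valuation `w`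
(`θ x = none` means `θ` maps `x` to itself). -/
def DRule.FES (cI : C → D) (pI : PredI P ar D) (r : DRule C P ar)
    (Y : Set (Atom C P ar)) (w : ℕ → D) : Prop :=
  ∃ θ : ℕ → Option (Term C),
    (∀ x t, θ x = some t → x ∈ DRule.headVars r ∧ t ∈ termsOf Y) ∧
    (∃ a ∈ r.head, Atom.subst (fun x => (θ x).getD (Term.var x)) a ∈ Y) ∧
    ∃ s : ℕ → D,
      let v : ℕ → D := fun x => match θ x with
        | some t => t.eval cI w
        | none => s x
      (∀ b ∈ r.body, pI b.1 (fun i => (b.2 i).eval cI v)) ∧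
      (DRule.neg r).sat cI pI v ∧
      (∀ b ∈ r.body, ∀ t' : Fin (ar b.1) → Term C, (⟨b.1, t'⟩ : Atom C P ar) ∈ Y →
        ¬ ∀ i, (b.2 i).eval cI v = (t' i).eval cI w) ∧
      ¬ ∃ a ∈ r.head, pI a.1 (fun i => (a.2 i).eval cI v) ∧
          ∀ t' : Fin (ar a.1) → Term C, (⟨a.1, t'⟩ : Atom C P ar) ∈ Y →
            ¬ ∀ i, (a.2 i).eval cI v = (t' i).eval cI w

def DProg.FES (cI : C → D) (pI : PredI P ar D) (Pr : DProg C P ar)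
    (Y : Set (Atom C P ar)) (w : ℕ → D) : Prop :=
  ∃ r ∈ Pr, DRule.FES cI pI r Y w

/-! ### Extended programs -/

/-- Every occurrence of an implication belongs to (an occurrence of) a negative formula. -/
def Fml.impsProtected : Fml C P ar → Prop
  | .atom _ _ => True
  | .eq _ _ => True
  | .bot => True
  | .and F G => (Fml.and F G).isNegative ∨ (F.impsProtected ∧ G.impsProtected)
  | .or F G => (Fml.or F G).isNegative ∨ (F.impsProtected ∧ G.impsProtected)
  | .imp F G => (Fml.imp F G).isNegative
  | .all x F => (Fml.all x F).isNegative ∨ F.impsProtected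
  | .ex x F => (Fml.ex x F).isNegative ∨ F.impsProtected

/-- An extended rule `H ← G`. -/
structure ERule (C P : Type) (ar : P → ℕ) where
  head : Fml C P ar
  body : Fml C P ar

abbrev EProg (C P : Type) (ar : P → ℕ) := List (ERule C P ar)

def ERule.toFml (r : ERule C P ar) : Fml C P ar := Fml.imp r.body r.head

def EProg.toFml (Pr : EProg C P ar) : Fml C P ar :=
  Pr.foldr (fun r G => (Fml.closure (ERule.toFml r)).and G) Fml.top

/-- One disjunct of `EFES_Π(Y)` under valuation `w`: the rule head contains a strictly
positive occurrence of a predicate constant occurring in an atom of `Y`, and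
`∃z(NFES_G(Y) ∧ ¬NFES_H(Y))`. -/
def ERule.EFES (cI : C → D) (pI : PredI P ar D) (r : ERule C P ar)
    (Y : Set (Atom C P ar)) (w : ℕ → D) : Prop :=
  (∃ p : P, (∃ t, (⟨p, t⟩ : Atom C P ar) ∈ (ERule.head r).spAtoms) ∧
      ∃ t', (⟨p, t'⟩ : Atom C P ar) ∈ Y) ∧
  ∃ s : ℕ → D, (ERule.body r).satNFES cI pI Y w s ∧ ¬ (ERule.head r).satNFES cI pI Y w s

def EProg.EFES (cI : C → D) (pI : PredI P ar D) (Pr : EProg C P ar)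
    (Y : Set (Atom C P ar)) (w : ℕ → D) : Prop :=
  ∃ r ∈ Pr, ERule.EFES cI pI r Y w

/-- A disjunctive rule viewed as an extended rule. -/
def DRule.toERule (r : DRule C P ar) : ERule C P ar :=
  ⟨r.head.foldr (fun a G => (Atom.toFml a).or G) Fml.bot,
   r.body.foldr (fun a G => (Atom.toFml a).and G) r.neg⟩


/-! ### Auxiliary lemmas for Statement 16 -/

section Aux16
variable {C P D : Type} {ar : P → ℕ}

theorem aux_term_eval_agree (cI : C → D) {v v' : ℕ → D} (t : Term C)
    (h : ∀ x ∈ t.vars, v x = v' x) : t.eval cI v = t.eval cI v' := by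
  cases t with
  | var x => exact h x rfl
  | const c => rfl

theorem aux_sat_agree (cI : C → D) (pI : PredI P ar D) (F : Fml C P ar) :
    ∀ {v v' : ℕ → D}, (∀ x ∈ F.freeVars, v x = v' x) →
      (F.sat cI pI v ↔ F.sat cI pI v') := by
  induction F with
  | atom p t =>
    intro v v' h
    have he : ∀ i, (t i).eval cI v = (t i).eval cI v' := fun i =>
      aux_term_eval_agree cI (t i) (fun x hx => h x (Set.mem_iUnion.2 ⟨i, hx⟩))
    simp only [Fml.sat, he]
  | eq t₁ t₂ =>
    intro v v' h
    simp only [Fml.sat]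
    rw [aux_term_eval_agree cI t₁ (fun x hx => h x (Set.mem_union_left _ hx)),
        aux_term_eval_agree cI t₂ (fun x hx => h x (Set.mem_union_right _ hx))]
  | bot => intro v v' _; exact Iff.rfl
  | and F G ihF ihG =>
    intro v v' h
    exact and_congr (ihF fun x hx => h x (Set.mem_union_left _ hx))
      (ihG fun x hx => h x (Set.mem_union_right _ hx))
  | or F G ihF ihG =>
    intro v v' h
    exact or_congr (ihF fun x hx => h x (Set.mem_union_left _ hx))
      (ihG fun x hx => h x (Set.mem_union_right _ hx))
  | imp F G ihF ihG =>
    intro v v' h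
    exact imp_congr (ihF fun x hx => h x (Set.mem_union_left _ hx))
      (ihG fun x hx => h x (Set.mem_union_right _ hx))
  | all x F ih =>
    intro v v' h
    refine forall_congr' fun d => ih fun y hy => ?_
    by_cases hxy : y = x
    · subst hxy; simp
    · rw [Function.update_of_ne hxy, Function.update_of_ne hxy]
      exact h y ⟨hy, hxy⟩
  | ex x F ih =>
    intro v v' h
    refine exists_congr fun d => ih fun y hy => ?_
    by_cases hxy : y = x
    · subst hxy; simp
    · rw [Function.update_of_ne hxy, Function.update_of_ne hxy]
      exact h y ⟨hy, hxy⟩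

theorem aux_satNFES_agree (cI : C → D) (pI : PredI P ar D) (Y : Set (Atom C P ar))
    (w : ℕ → D) (F : Fml C P ar) :
    ∀ {v v' : ℕ → D}, (∀ x ∈ F.freeVars, v x = v' x) →
      (F.satNFES cI pI Y w v ↔ F.satNFES cI pI Y w v') := by
  induction F with
  | atom p t =>
    intro v v' h
    have he : ∀ i, (t i).eval cI v = (t i).eval cI v' := fun i =>
      aux_term_eval_agree cI (t i) (fun x hx => h x (Set.mem_iUnion.2 ⟨i, hx⟩))
    simp only [Fml.satNFES, he]
  | eq t₁ t₂ =>
    intro v v' h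
    simp only [Fml.satNFES]
    rw [aux_term_eval_agree cI t₁ (fun x hx => h x (Set.mem_union_left _ hx)),
        aux_term_eval_agree cI t₂ (fun x hx => h x (Set.mem_union_right _ hx))]
  | bot => intro v v' _; exact Iff.rfl
  | and F G ihF ihG =>
    intro v v' h
    exact and_congr (ihF fun x hx => h x (Set.mem_union_left _ hx))
      (ihG fun x hx => h x (Set.mem_union_right _ hx))
  | or F G ihF ihG =>
    intro v v' h
    exact or_congr (ihF fun x hx => h x (Set.mem_union_left _ hx))
      (ihG fun x hx => h x (Set.mem_union_right _ hx))
  | imp F G ihF ihG =>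
    intro v v' h
    exact and_congr
      (imp_congr (ihF fun x hx => h x (Set.mem_union_left _ hx))
        (ihG fun x hx => h x (Set.mem_union_right _ hx)))
      (imp_congr (aux_sat_agree cI pI F fun x hx => h x (Set.mem_union_left _ hx))
        (aux_sat_agree cI pI G fun x hx => h x (Set.mem_union_right _ hx)))
  | all x F ih =>
    intro v v' h
    refine forall_congr' fun d => ih fun y hy => ?_
    by_cases hxy : y = x
    · subst hxy; simp
    · rw [Function.update_of_ne hxy, Function.update_of_ne hxy]
      exact h y ⟨hy, hxy⟩
  | ex x F ih =>
    intro v v' h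
    refine exists_congr fun d => ih fun y hy => ?_
    by_cases hxy : y = x
    · subst hxy; simp
    · rw [Function.update_of_ne hxy, Function.update_of_ne hxy]
      exact h y ⟨hy, hxy⟩

theorem aux_satNFES_sat (cI : C → D) (pI : PredI P ar D) (Y : Set (Atom C P ar))
    (w : ℕ → D) (F : Fml C P ar) :
    ∀ {v : ℕ → D}, F.satNFES cI pI Y w v → F.sat cI pI v := by
  induction F with
  | atom p t => intro v h; exact h.1
  | eq t₁ t₂ => intro v h; exact h
  | bot => intro v h; exact h
  | and F G ihF ihG => intro v h; exact ⟨ihF h.1, ihG h.2⟩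
  | or F G ihF ihG => intro v h; exact h.elim (fun h => Or.inl (ihF h)) (fun h => Or.inr (ihG h))
  | imp F G ihF ihG => intro v h; exact h.2
  | all x F ih => intro v h d; exact ih (h d)
  | ex x F ih => intro v h; obtain ⟨d, hd⟩ := h; exact ⟨d, ih hd⟩

theorem aux_satNFES_of_neg (cI : C → D) (pI : PredI P ar D) (Y : Set (Atom C P ar))
    (w : ℕ → D) :
    ∀ F : Fml C P ar, F.isNegativeB = true →
      ∀ v : ℕ → D, (F.satNFES cI pI Y w v ↔ F.sat cI pI v) := by
  intro F
  induction F with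
  | atom p t => intro h; simp [Fml.isNegativeB] at h
  | eq t₁ t₂ => intro _ v; exact Iff.rfl
  | bot => intro _ v; exact Iff.rfl
  | and F G ihF ihG =>
    intro h v
    rw [Fml.isNegativeB, Bool.and_eq_true] at h
    exact and_congr (ihF h.1 v) (ihG h.2 v)
  | or F G ihF ihG =>
    intro h v
    rw [Fml.isNegativeB, Bool.and_eq_true] at h
    exact or_congr (ihF h.1 v) (ihG h.2 v)
  | imp F G ihF ihG =>
    intro h v
    rw [Fml.isNegativeB] at h
    constructor
    · intro hh; exact hh.2
    · intro hh
      exact ⟨fun hF => (ihG h v).2 (hh (aux_satNFES_sat cI pI Y w F hF)), hh⟩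
  | all x F ih =>
    intro h v
    rw [Fml.isNegativeB] at h
    exact forall_congr' fun d => ih h _
  | ex x F ih =>
    intro h v
    rw [Fml.isNegativeB] at h
    exact exists_congr fun d => ih h _

theorem aux_satNFES_of_noY (cI : C → D) (pI : PredI P ar D) (Y : Set (Atom C P ar))
    (w : ℕ → D) :
    ∀ F : Fml C P ar, F.impsProtected →
      (∀ p t, (⟨p, t⟩ : Atom C P ar) ∈ F.spAtoms → ∀ t', (⟨p, t'⟩ : Atom C P ar) ∉ Y) →
      ∀ v : ℕ → D, (F.satNFES cI pI Y w v ↔ F.sat cI pI v) := by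
  intro F
  induction F with
  | atom p t =>
    intro _ hY v
    constructor
    · intro h; exact h.1
    · intro h
      exact ⟨h, fun t' ht' _ => hY p t rfl t' ht'⟩
  | eq t₁ t₂ => intro _ _ v; exact Iff.rfl
  | bot => intro _ _ v; exact Iff.rfl
  | and F G ihF ihG =>
    intro hp hY v
    rcases hp with hneg | ⟨h1, h2⟩
    · exact aux_satNFES_of_neg cI pI Y w _ hneg v
    · exact and_congr
        (ihF h1 (fun p t ht => hY p t (Set.mem_union_left _ ht)) v)
        (ihG h2 (fun p t ht => hY p t (Set.mem_union_right _ ht)) v)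
  | or F G ihF ihG =>
    intro hp hY v
    rcases hp with hneg | ⟨h1, h2⟩
    · exact aux_satNFES_of_neg cI pI Y w _ hneg v
    · exact or_congr
        (ihF h1 (fun p t ht => hY p t (Set.mem_union_left _ ht)) v)
        (ihG h2 (fun p t ht => hY p t (Set.mem_union_right _ ht)) v)
  | imp F G ihF ihG =>
    intro hp hY v
    exact aux_satNFES_of_neg cI pI Y w _ hp v
  | all x F ih =>
    intro hp hY v
    rcases hp with hneg | h1
    · exact aux_satNFES_of_neg cI pI Y w _ hneg v
    · exact forall_congr' fun d => ih h1 hY _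
  | ex x F ih =>
    intro hp hY v
    rcases hp with hneg | h1
    · exact aux_satNFES_of_neg cI pI Y w _ hneg v
    · exact exists_congr fun d => ih h1 hY _

theorem aux_mem_varList {t : Term C} {x : ℕ} (h : x ∈ t.vars) : x ∈ t.varList := by
  cases t with
  | var y =>
    have : x = y := h
    subst this; simp [Term.varList]
  | const c => exact absurd h (by simp [Term.vars])

theorem aux_mem_foldr_append {α : Type*} (f : α → List ℕ) (L : List α) (x : ℕ) :
    x ∈ L.foldr (fun i l => f i ++ l) [] ↔ ∃ i ∈ L, x ∈ f i := by
  induction L with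
  | nil => simp
  | cons a L ih => simp [ih]

theorem aux_freeVars_subset_freeList (F : Fml C P ar) :
    ∀ x ∈ F.freeVars, x ∈ F.freeList := by
  induction F with
  | atom p t =>
    intro x hx
    obtain ⟨i, hi⟩ := Set.mem_iUnion.1 hx
    rw [Fml.freeList, aux_mem_foldr_append]
    exact ⟨i, List.mem_finRange i, aux_mem_varList hi⟩
  | eq t₁ t₂ =>
    intro x hx
    rw [Fml.freeList, List.mem_append]
    exact hx.elim (fun h => Or.inl (aux_mem_varList h)) (fun h => Or.inr (aux_mem_varList h))
  | bot => intro x hx; exact absurd hx (by simp [Fml.freeVars])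
  | and F G ihF ihG =>
    intro x hx
    rw [Fml.freeList, List.mem_append]
    exact hx.elim (fun h => Or.inl (ihF x h)) (fun h => Or.inr (ihG x h))
  | or F G ihF ihG =>
    intro x hx
    rw [Fml.freeList, List.mem_append]
    exact hx.elim (fun h => Or.inl (ihF x h)) (fun h => Or.inr (ihG x h))
  | imp F G ihF ihG =>
    intro x hx
    rw [Fml.freeList, List.mem_append]
    exact hx.elim (fun h => Or.inl (ihF x h)) (fun h => Or.inr (ihG x h))
  | all y F ih =>
    intro x hx
    rw [Fml.freeList, List.mem_filter]
    exact ⟨ih x hx.1, by simpa using hx.2⟩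
  | ex y F ih =>
    intro x hx
    rw [Fml.freeList, List.mem_filter]
    exact ⟨ih x hx.1, by simpa using hx.2⟩

theorem aux_foldr_all_inst (S : Fml C P ar → (ℕ → D) → Prop)
    (hall : ∀ x G v, S (Fml.all x G) v ↔ ∀ d, S G (Function.update v x d))
    (F : Fml C P ar) :
    ∀ (L : List ℕ) (v : ℕ → D), S (L.foldr Fml.all F) v →
      ∀ s : ℕ → D, S F (fun x => if x ∈ L then s x else v x) := by
  intro L
  induction L with
  | nil =>
    intro v h s
    have : (fun x => if x ∈ ([] : List ℕ) then s x else v x) = v := by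
      funext x; simp
    rw [this]; exact h
  | cons a L ih =>
    intro v h s
    rw [List.foldr_cons, hall] at h
    have h2 := ih (Function.update v a (s a)) (h (s a)) s
    have heq : (fun x => if x ∈ L then s x else Function.update v a (s a) x)
        = fun x => if x ∈ a :: L then s x else v x := by
      funext x
      by_cases hL : x ∈ L
      · simp [hL]
      · by_cases hax : x = a
        · subst hax; simp [hL]
        · simp [hL, hax, Function.update_of_ne hax]
    rw [heq] at h2
    exact h2

theorem aux_foldr_all_neg (S : Fml C P ar → (ℕ → D) → Prop)
    (hall : ∀ x G v, S (Fml.all x G) v ↔ ∀ d, S G (Function.update v x d))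
    (F : Fml C P ar) :
    ∀ (L : List ℕ) (v : ℕ → D), ¬ S (L.foldr Fml.all F) v → ∃ s : ℕ → D, ¬ S F s := by
  intro L
  induction L with
  | nil => exact fun v h => ⟨v, h⟩
  | cons a L ih =>
    intro v h
    rw [List.foldr_cons, hall, not_forall] at h
    obtain ⟨d, hd⟩ := h
    exact ih _ hd

theorem aux_sat_closure (cI : C → D) (pI : PredI P ar D) (F : Fml C P ar) (v : ℕ → D)
    (h : (Fml.closure F).sat cI pI v) : ∀ s : ℕ → D, F.sat cI pI s := by
  intro s
  have h2 := aux_foldr_all_inst (fun G u => G.sat cI pI u) (fun _ _ _ => Iff.rfl)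
    F F.freeList v h s
  refine (aux_sat_agree cI pI F (fun x hx => ?_)).1 h2
  simp [aux_freeVars_subset_freeList F x hx]

theorem aux_satNFES_closure (cI : C → D) (pI : PredI P ar D) (Y : Set (Atom C P ar))
    (w : ℕ → D) (F : Fml C P ar) (v : ℕ → D)
    (h : (Fml.closure F).satNFES cI pI Y w v) : ∀ s : ℕ → D, F.satNFES cI pI Y w s := by
  intro s
  have h2 := aux_foldr_all_inst (fun G u => G.satNFES cI pI Y w u) (fun _ _ _ => Iff.rfl)
    F F.freeList v h s
  refine (aux_satNFES_agree cI pI Y w F (fun x hx => ?_)).1 h2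
  simp [aux_freeVars_subset_freeList F x hx]

theorem aux_satNFES_prog (cI : C → D) (pI : PredI P ar D) (Y : Set (Atom C P ar))
    (w v : ℕ → D) (Pr : EProg C P ar) :
    (EProg.toFml Pr).satNFES cI pI Y w v ↔
      ∀ r ∈ Pr, (Fml.closure (ERule.toFml r)).satNFES cI pI Y w v := by
  induction Pr with
  | nil =>
    simp [EProg.toFml, Fml.top, Fml.satNFES, Fml.sat]
  | cons r Pr ih =>
    show ((Fml.closure (ERule.toFml r)).satNFES cI pI Y w v ∧
        (EProg.toFml Pr).satNFES cI pI Y w v) ↔ _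
    rw [ih]
    simp [List.forall_mem_cons]

theorem aux_sat_prog (cI : C → D) (pI : PredI P ar D) (v : ℕ → D) (Pr : EProg C P ar)
    (h : (EProg.toFml Pr).sat cI pI v) :
    ∀ r ∈ Pr, (Fml.closure (ERule.toFml r)).sat cI pI v := by
  induction Pr with
  | nil => simp
  | cons r Pr ih =>
    intro r' hr'
    rcases List.mem_cons.1 hr' with h1 | h1
    · subst h1; exact h.1
    · exact ih h.2 r' h1

end Aux16

/-- Proposition 7, first part: for an extended program `Π` with
FOL-representation `F` and a finite set `Y` of non-equality atoms, every model of `Π`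
satisfies the universal closure of `EFES_Π(Y) ↔ ¬NFES_F(Y)`. -/
theorem statement_16 {C P D : Type} {ar : P → ℕ} [Nonempty D]
    (cI : C → D) (pI : PredI P ar D) (Pr : EProg C P ar)
    (hrules : ∀ r ∈ Pr, (ERule.head r).impsProtected ∧ (ERule.body r).impsProtected)
    (Y : Set (Atom C P ar)) (hYfin : Y.Finite)
    (hmodel : (EProg.toFml Pr).satSent cI pI) :
    ∀ w : ℕ → D,
      EProg.EFES cI pI Pr Y w ↔ ¬ (EProg.toFml Pr).satNFES cI pI Y w w := by
  intro w
  constructor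
  · rintro ⟨r, hr, hsp, s, hG, hH⟩
    intro hall
    have hcl := (aux_satNFES_prog cI pI Y w w Pr).1 hall r hr
    have h2 := aux_satNFES_closure cI pI Y w (ERule.toFml r) w hcl s
    have h3 : ((ERule.body r).satNFES cI pI Y w s → (ERule.head r).satNFES cI pI Y w s) ∧
        ((ERule.body r).sat cI pI s → (ERule.head r).sat cI pI s) := h2
    exact hH (h3.1 hG)
  · intro hns
    have hex : ∃ r ∈ Pr, ¬ (Fml.closure (ERule.toFml r)).satNFES cI pI Y w w := by
      by_contra hc
      push_neg at hc
      exact hns ((aux_satNFES_prog cI pI Y w w Pr).2 hc)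
    obtain ⟨r, hr, hfail⟩ := hex
    obtain ⟨s, hs⟩ := aux_foldr_all_neg (fun G u => G.satNFES cI pI Y w u)
      (fun _ _ _ => Iff.rfl) (ERule.toFml r) (ERule.toFml r).freeList w hfail
    have hGH : (ERule.body r).sat cI pI s → (ERule.head r).sat cI pI s :=
      aux_sat_closure cI pI (ERule.toFml r) s
        (aux_sat_prog cI pI s Pr (hmodel s) r hr) s
    have hs' : ¬ (((ERule.body r).satNFES cI pI Y w s →
        (ERule.head r).satNFES cI pI Y w s) ∧
        ((ERule.body r).sat cI pI s → (ERule.head r).sat cI pI s)) := hs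
    have h1 : ¬ ((ERule.body r).satNFES cI pI Y w s →
        (ERule.head r).satNFES cI pI Y w s) := fun h' => hs' ⟨h', hGH⟩
    rw [Classical.not_imp] at h1
    obtain ⟨hG, hH⟩ := h1
    by_cases hsp : ∃ p : P, (∃ t, (⟨p, t⟩ : Atom C P ar) ∈ (ERule.head r).spAtoms) ∧
        ∃ t', (⟨p, t'⟩ : Atom C P ar) ∈ Y
    · exact ⟨r, hr, hsp, s, hG, hH⟩
    · exfalso
      push_neg at hsp
      have hY : ∀ p t, (⟨p, t⟩ : Atom C P ar) ∈ (ERule.head r).spAtoms →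
          ∀ t', (⟨p, t'⟩ : Atom C P ar) ∉ Y := fun p t ht t' => hsp p ⟨t, ht⟩ t'
      have hiff := aux_satNFES_of_noY cI pI Y w (ERule.head r) (hrules r hr).1 hY s
      exact hH (hiff.2 (hGH (aux_satNFES_sat cI pI Y w (ERule.body r) hG)))

end SMLF
end

section
/- For any negative first-order formula F and any finite set Y of non-equality atoms, NFES_F(Y) is logically equivalent to F; that is, the universal closure of NFES_F(Y) ↔ F is logically valid. -/
set_option linter.unusedVariables false

namespace SMLF

variable {C P D : Type} {ar : P → ℕ}

theorem satNFES_sat {C P D : Type} {ar : P → ℕ}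
    (F : Fml C P ar) (Y : Set (Atom C P ar))
    (cI : C → D) (pI : PredI P ar D) (w : ℕ → D) :
    ∀ v, F.satNFES cI pI Y w v → F.sat cI pI v := by
  induction F with
  | atom p t => intro v h; exact h.1
  | eq t₁ t₂ => intro v h; exact h
  | bot => intro v h; exact h
  | and F G ihF ihG => intro v h; exact ⟨ihF v h.1, ihG v h.2⟩
  | or F G ihF ihG => intro v h; exact h.elim (fun h => Or.inl (ihF v h)) (fun h => Or.inr (ihG v h))
  | imp F G ihF ihG => intro v h; exact h.2
  | all x F ih => intro v h d; exact ih _ (h d)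
  | ex x F ih => intro v h; obtain ⟨d, hd⟩ := h; exact ⟨d, ih _ hd⟩

/-- Lemma 6: for any negative formula `F` and any finite set `Y` of
non-equality atoms, the universal closure of `NFES_F(Y) ↔ F` is logically valid. -/
theorem statement_18 {C P D : Type} {ar : P → ℕ}
    (F : Fml C P ar) (hFneg : F.isNegative)
    (Y : Set (Atom C P ar)) (hYfin : Y.Finite)
    (cI : C → D) (pI : PredI P ar D) (w v : ℕ → D) :
    F.satNFES cI pI Y w v ↔ F.sat cI pI v := by

  induction F generalizing v with
  | atom p t => simp [Fml.isNegative, Fml.isNegativeB] at hFneg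
  | eq t₁ t₂ => rfl
  | bot => rfl
  | and F G ihF ihG =>
      simp only [Fml.isNegative, Fml.isNegativeB, Bool.and_eq_true] at hFneg
      exact and_congr (ihF hFneg.1 v) (ihG hFneg.2 v)
  | or F G ihF ihG =>
      simp only [Fml.isNegative, Fml.isNegativeB, Bool.and_eq_true] at hFneg
      exact or_congr (ihF hFneg.1 v) (ihG hFneg.2 v)
  | imp F G ihF ihG =>
      have hG : G.isNegative := hFneg
      constructor
      · intro h; exact h.2
      · intro h
        exact ⟨fun hf => (ihG hG v).mpr (h (satNFES_sat F Y cI pI w v hf)), h⟩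
  | all x F ih =>
      exact forall_congr' fun d => ih hFneg _
  | ex x F ih =>
      exact exists_congr fun d => ih hFneg _


end SMLF
end

section
/- For any negative first-order formula F with predicate constants among p = p1,…,pn, the formula NES_F(u) ↔ F is logically valid, where u = u1,…,un are predicate variables; that is, for every interpretation and every assignment of relations to u, NES_F(u) and F have the same truth value. -/
set_option linter.unusedVariables false

namespace SMLF

variable {C P D : Type} {ar : P → ℕ}

theorem satNES_imp_sat {C P D : Type} {ar : P → ℕ} {cI : C → D} {pI uI : PredI P ar D}
    (F : Fml C P ar) {v : ℕ → D} (h : F.satNES cI pI uI v) : F.sat cI pI v := by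
  induction F generalizing v with
  | atom p t => exact h.1
  | eq t₁ t₂ => exact h
  | bot => exact h
  | and F G ihF ihG => exact ⟨ihF h.1, ihG h.2⟩
  | or F G ihF ihG => exact h.elim (Or.inl ∘ ihF) (Or.inr ∘ ihG)
  | imp F G ihF ihG => exact h.2
  | all x F ihF => exact fun d => ihF (h d)
  | ex x F ihF => exact h.imp fun d hd => ihF hd

/-- Lemma 7: for any negative formula `F`, the formula `NES_F(u) ↔ F` is
logically valid. -/
theorem statement_19 {C P D : Type} {ar : P → ℕ}
    (F : Fml C P ar) (hFneg : F.isNegative)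
    (cI : C → D) (pI uI : PredI P ar D) (v : ℕ → D) :
    F.satNES cI pI uI v ↔ F.sat cI pI v := by
  induction F generalizing v with
  | atom p t => exact absurd hFneg (by simp [Fml.isNegative, Fml.isNegativeB])
  | eq t₁ t₂ => exact Iff.rfl
  | bot => exact Iff.rfl
  | and F G ihF ihG =>
    simp only [Fml.isNegative, Fml.isNegativeB, Bool.and_eq_true] at hFneg
    exact and_congr (ihF hFneg.1 v) (ihG hFneg.2 v)
  | or F G ihF ihG =>
    simp only [Fml.isNegative, Fml.isNegativeB, Bool.and_eq_true] at hFneg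
    exact or_congr (ihF hFneg.1 v) (ihG hFneg.2 v)
  | imp F G ihF ihG =>
    have hG : G.isNegative := hFneg
    constructor
    · exact fun h => h.2
    · intro h
      exact ⟨fun hF => (ihG hG v).mpr (h (satNES_imp_sat F hF)), h⟩
  | all x F ihF => exact forall_congr' fun d => ihF hFneg _
  | ex x F ihF => exact exists_congr fun d => ihF hFneg _

end SMLF
end
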